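/- Let K₁, K₂ ⊆ ℝⁿ be closed, x* ∈ K = K₁ ∩ K₂, with the hypotheses of the 2-SHQP setting: super-regularity bound (1) with parameter δ and local metric inequality (2) with constant β on V. With x₁ ∈ P_{K₁}(x₀), x₂ ∈ P_{K₂}(x₁), and B(x₂, β‖x₂ - x₁‖) ⊆ V, every point y ∈ B(x₂, β‖x₂ - x₁‖) ∩ K satisfies ⟨y - x₂, x₁ - x₂⟩ ≤ βδ‖x₁ - x₂‖². Consequently B(x₂, β‖x₂ - x₁‖) ∩ K ⊆ H₂ := {x : ⟨x - x₂, x₁ - x₂⟩ ≤ βδ‖x₁ - x₂‖²}, and this intersection is nonempty. -/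
import Mathlib


open scoped RealInnerProductSpace
open Metric Filter

/-- The regular (Fréchet) normal cone of `C` at `x`. -/
def regNormalCone {n : ℕ} (C : Set (EuclideanSpace ℝ (Fin n)))
    (x : EuclideanSpace ℝ (Fin n)) : Set (EuclideanSpace ℝ (Fin n)) :=
  {v | ∀ ε > 0, ∃ δ > 0, ∀ y ∈ C, ‖y - x‖ < δ → ⟪v, y - x⟫ ≤ ε * ‖y - x‖}

/-- The limiting normal cone of `C` at `x`: limits of regular normals at points of `C`
converging to `x`. -/
def limNormalCone {n : ℕ} (C : Set (EuclideanSpace ℝ (Fin n)))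
    (x : EuclideanSpace ℝ (Fin n)) : Set (EuclideanSpace ℝ (Fin n)) :=
  {v | ∃ xs vs : ℕ → EuclideanSpace ℝ (Fin n), (∀ i, xs i ∈ C) ∧
    Tendsto xs atTop (nhds x) ∧ (∀ i, vs i ∈ regNormalCone C (xs i)) ∧
    Tendsto vs atTop (nhds v)}

/-- In the 2-SHQP setting, every `y ∈ B(x₂, β‖x₂-x₁‖) ∩ K` satisfies
`⟪y - x₂, x₁ - x₂⟫ ≤ βδ‖x₁-x₂‖²`; consequently `B(x₂, β‖x₂-x₁‖) ∩ K ⊆ H₂` and this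
intersection is nonempty. -/
theorem two_SHQP_halfspace_containment {n : ℕ}
    (K₁ K₂ : Set (EuclideanSpace ℝ (Fin n))) (hK₁ : IsClosed K₁) (hK₂ : IsClosed K₂)
    (xstar : EuclideanSpace ℝ (Fin n)) (hxstar : xstar ∈ K₁ ∩ K₂)
    (δ β : ℝ) (hδ : δ ∈ Set.Ioo (0:ℝ) 1) (hβ : 1 ≤ β)
    (V : Set (EuclideanSpace ℝ (Fin n))) (hV : V ∈ nhds xstar)
    (h1 : ∀ K ∈ ({K₁, K₂} : Set (Set (EuclideanSpace ℝ (Fin n)))),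
      ∀ y ∈ K ∩ V, ∀ z ∈ K ∩ V, ∀ v ∈ limNormalCone K z,
        ⟪v, y - z⟫ ≤ δ * ‖v‖ * ‖y - z‖)
    (h2 : ∀ x ∈ V, infDist x (K₁ ∩ K₂) ≤ β * max (infDist x K₁) (infDist x K₂))
    (x₀ x₁ x₂ : EuclideanSpace ℝ (Fin n))
    (hx₀ : x₀ ∈ V)
    (hx₁ : x₁ ∈ K₁) (hx₁p : dist x₀ x₁ = infDist x₀ K₁)
    (hx₂ : x₂ ∈ K₂) (hx₂p : dist x₁ x₂ = infDist x₁ K₂)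
    (hball : closedBall x₂ (β * ‖x₂ - x₁‖) ⊆ V) :
    (∀ y ∈ closedBall x₂ (β * ‖x₂ - x₁‖) ∩ (K₁ ∩ K₂),
        ⟪y - x₂, x₁ - x₂⟫ ≤ β * δ * ‖x₁ - x₂‖ ^ 2) ∧
      closedBall x₂ (β * ‖x₂ - x₁‖) ∩ (K₁ ∩ K₂) ⊆
        {x | ⟪x - x₂, x₁ - x₂⟫ ≤ β * δ * ‖x₁ - x₂‖ ^ 2} ∧
      (closedBall x₂ (β * ‖x₂ - x₁‖) ∩ (K₁ ∩ K₂)).Nonempty := by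

  obtain ⟨hδ0, hδ1⟩ := hδ
  have hβ0 : (0:ℝ) ≤ β := le_trans zero_le_one hβ
  -- x₁ - x₂ is a regular normal to K₂ at x₂
  have hreg : x₁ - x₂ ∈ regNormalCone K₂ x₂ := by
    intro ε hε
    refine ⟨2 * ε, by linarith, fun y hy hnorm => ?_⟩
    have hd : dist x₁ x₂ ≤ dist x₁ y := hx₂p ▸ infDist_le_dist_of_mem hy
    have h1' : ‖x₁ - x₂‖ ≤ ‖x₁ - y‖ := by
      simpa [dist_eq_norm] using hd
    have hexp : ‖(x₁ - x₂) - (y - x₂)‖ ^ 2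
        = ‖x₁ - x₂‖ ^ 2 - 2 * ⟪x₁ - x₂, y - x₂⟫ + ‖y - x₂‖ ^ 2 :=
      norm_sub_sq_real _ _
    have heq : x₁ - y = (x₁ - x₂) - (y - x₂) := by abel
    have hsq : ‖x₁ - x₂‖ ^ 2 ≤ ‖x₁ - y‖ ^ 2 := by
      exact pow_le_pow_left₀ (norm_nonneg _) h1' 2
    rw [heq, hexp] at hsq
    have hle : ⟪x₁ - x₂, y - x₂⟫ ≤ ‖y - x₂‖ ^ 2 / 2 := by linarith
    have : ‖y - x₂‖ ^ 2 / 2 ≤ ε * ‖y - x₂‖ := by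
      have := norm_nonneg (y - x₂)
      nlinarith
    linarith
  have hlim : x₁ - x₂ ∈ limNormalCone K₂ x₂ :=
    ⟨fun _ => x₂, fun _ => x₁ - x₂, fun _ => hx₂, tendsto_const_nhds,
      fun _ => hreg, tendsto_const_nhds⟩
  have hx₂ball : x₂ ∈ closedBall x₂ (β * ‖x₂ - x₁‖) := by
    simp [mul_nonneg hβ0 (norm_nonneg _)]
  have hx₂V : x₂ ∈ V := hball hx₂ball
  have hmain : ∀ y ∈ closedBall x₂ (β * ‖x₂ - x₁‖) ∩ (K₁ ∩ K₂),
      ⟪y - x₂, x₁ - x₂⟫ ≤ β * δ * ‖x₁ - x₂‖ ^ 2 := by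
    rintro y ⟨hyb, _, hyK₂⟩
    have hyV : y ∈ V := hball hyb
    have key := h1 K₂ (by simp) y ⟨hyK₂, hyV⟩ x₂ ⟨hx₂, hx₂V⟩ (x₁ - x₂) hlim
    have hsymm : ⟪y - x₂, x₁ - x₂⟫ = ⟪x₁ - x₂, y - x₂⟫ := real_inner_comm _ _
    have hyn : ‖y - x₂‖ ≤ β * ‖x₁ - x₂‖ := by
      have := mem_closedBall.mp hyb
      rw [dist_eq_norm] at this
      simpa [norm_sub_rev x₂ x₁] using this
    calc ⟪y - x₂, x₁ - x₂⟫ ≤ δ * ‖x₁ - x₂‖ * ‖y - x₂‖ := hsymm ▸ key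
      _ ≤ δ * ‖x₁ - x₂‖ * (β * ‖x₁ - x₂‖) := by
          exact mul_le_mul_of_nonneg_left hyn
            (mul_nonneg hδ0.le (norm_nonneg _))
      _ = β * δ * ‖x₁ - x₂‖ ^ 2 := by ring
  refine ⟨hmain, fun y hy => hmain y hy, ?_⟩
  -- nonemptiness
  have hne : (K₁ ∩ K₂).Nonempty := ⟨xstar, hxstar⟩
  obtain ⟨z, hzK, hzd⟩ := (hK₁.inter hK₂).exists_infDist_eq_dist hne x₂
  refine ⟨z, ?_, hzK⟩
  rw [mem_closedBall, dist_comm]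
  rw [← hzd]
  have h2' := h2 x₂ hx₂V
  have hK₂0 : infDist x₂ K₂ = 0 := infDist_zero_of_mem hx₂
  have hK₁le : infDist x₂ K₁ ≤ dist x₂ x₁ := infDist_le_dist_of_mem hx₁
  have hmax : max (infDist x₂ K₁) (infDist x₂ K₂) ≤ dist x₂ x₁ := by
    rw [hK₂0]
    exact max_le hK₁le dist_nonneg
  calc infDist x₂ (K₁ ∩ K₂) ≤ β * max (infDist x₂ K₁) (infDist x₂ K₂) := h2'
    _ ≤ β * dist x₂ x₁ := mul_le_mul_of_nonneg_left hmax hβ0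
    _ = β * ‖x₂ - x₁‖ := by rw [dist_eq_norm]
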